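/- Let m ≥ 1, ε > 0, Δ > 0, and let t, t' ∈ ℝ^m satisfy ‖t − t'‖₁ ≤ Δ. Let μ_t denote the product measure on ℝ^m whose i-th factor is the Laplace distribution Lap(t_i, Δ/ε), and similarly μ_{t'}. Then μ_t is (ε, 0)-close to μ_{t'}: for every measurable set A ⊆ ℝ^m, μ_t(A) ≤ e^ε · μ_{t'}(A). -/

import Mathlib

open MeasureTheory
open scoped ENNReal

/-- The Laplace distribution `Lap(μ, b)` on `ℝ`, with density
`x ↦ (2b)⁻¹ exp (−|x − μ|/b)` with respect to Lebesgue measure. -/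
noncomputable def laplaceMeasure (m b : ℝ) : Measure ℝ :=
  volume.withDensity fun x => ENNReal.ofReal ((2 * b)⁻¹ * Real.exp (-|x - m| / b))

lemma lintegral_pi_prod_aux {n : ℕ} (f : Fin n → ℝ → ℝ≥0∞) (hf : ∀ i, Measurable (f i)) :
    ∫⁻ x : Fin n → ℝ, ∏ i, f i (x i) ∂(Measure.pi fun _ => (volume : Measure ℝ)) =
      ∏ i, ∫⁻ x, f i x := by
  induction n with
  | zero => simp [Measure.pi_of_empty]
  | succ n ih =>
    have hmeas : Measurable fun x : Fin (n + 1) → ℝ => ∏ i, f i (x i) :=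
      Finset.measurable_prod _ fun i _ => (hf i).comp (measurable_pi_apply i)
    have h := (measurePreserving_piFinSuccAbove
      (fun _ : Fin (n + 1) => (volume : Measure ℝ)) 0).symm
    calc ∫⁻ x : Fin (n + 1) → ℝ, ∏ i, f i (x i) ∂(Measure.pi fun _ => volume)
        = ∫⁻ y : ℝ × (Fin n → ℝ),
            ∏ i, f i (((MeasurableEquiv.piFinSuccAbove (fun _ => ℝ) 0).symm y) i)
            ∂((volume : Measure ℝ).prod (Measure.pi fun _ => volume)) := by
          rw [h.lintegral_comp hmeas]
      _ = ∫⁻ y : ℝ × (Fin n → ℝ), f 0 y.1 * ∏ i : Fin n, f i.succ (y.2 i)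
            ∂((volume : Measure ℝ).prod (Measure.pi fun _ => volume)) := by
          congr 1
          ext y
          simp [MeasurableEquiv.piFinSuccAbove_symm_apply, Fin.insertNthEquiv,
            Fin.prod_univ_succ, Fin.insertNth_zero, Fin.zero_succAbove]
      _ = (∫⁻ x, f 0 x) * ∫⁻ x : Fin n → ℝ, ∏ i : Fin n, f i.succ (x i)
            ∂(Measure.pi fun _ => volume) := by
          exact lintegral_prod_mul (hf 0).aemeasurable
            (Finset.measurable_prod _ fun (i : Fin n) _ =>
              (hf i.succ).comp (measurable_pi_apply i)).aemeasurable
      _ = ∏ i, ∫⁻ x, f i x := by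
          rw [ih (fun i => f i.succ) (fun i => hf i.succ), Fin.prod_univ_succ]

lemma laplaceDensity_measurable (c b : ℝ) :
    Measurable fun x : ℝ => ENNReal.ofReal ((2 * b)⁻¹ * Real.exp (-|x - c| / b)) := by
  fun_prop

lemma pi_laplace_eq {n : ℕ} (c : Fin n → ℝ) (b : ℝ) :
    Measure.pi (fun i => laplaceMeasure (c i) b) =
      (Measure.pi fun _ => (volume : Measure ℝ)).withDensity
        (fun x => ∏ i, ENNReal.ofReal ((2 * b)⁻¹ * Real.exp (-|x i - c i| / b))) := by
  have hsf : ∀ i : Fin n, SigmaFinite (laplaceMeasure (c i) b) := fun i =>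
    SigmaFinite.withDensity_of_ne_top (ae_of_all _ fun x => ENNReal.ofReal_ne_top)
  refine Measure.pi_eq fun s hs => ?_
  set g : Fin n → ℝ → ℝ≥0∞ :=
    fun i x => ENNReal.ofReal ((2 * b)⁻¹ * Real.exp (-|x - c i| / b)) with hg
  have hgm : ∀ i, Measurable (g i) := fun i => laplaceDensity_measurable (c i) b
  have hprod : Measurable fun x : Fin n → ℝ => ∏ i, g i (x i) :=
    Finset.measurable_prod _ fun i _ => (hgm i).comp (measurable_pi_apply i)
  rw [withDensity_apply _ (MeasurableSet.univ_pi hs),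
    ← lintegral_indicator (MeasurableSet.univ_pi hs)]
  have hind : ∀ x : Fin n → ℝ,
      (Set.pi Set.univ s).indicator (fun x => ∏ i, g i (x i)) x =
        ∏ i, (s i).indicator (g i) (x i) := by
    intro x
    by_cases hx : x ∈ Set.pi Set.univ s
    · rw [Set.indicator_of_mem hx]
      exact Finset.prod_congr rfl fun i _ =>
        (Set.indicator_of_mem (hx i (Set.mem_univ i)) _).symm
    · rw [Set.indicator_of_notMem hx]
      have hex : ∃ i, x i ∉ s i := by
        by_contra hcon
        push_neg at hcon
        exact hx fun i _ => hcon i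
      obtain ⟨i, hi⟩ := hex
      exact (Finset.prod_eq_zero (Finset.mem_univ i)
        (Set.indicator_of_notMem hi _)).symm
  refine (lintegral_congr hind).trans ?_
  rw [lintegral_pi_prod_aux (fun i => (s i).indicator (g i))
    (fun i => (hgm i).indicator (hs i))]
  refine Finset.prod_congr rfl fun i _ => ?_
  rw [lintegral_indicator (hs i), laplaceMeasure, withDensity_apply _ (hs i)]

/-- The Laplace mechanism is `(ε, 0)`-differentially private: if `‖t - t'‖₁ ≤ Δ`,
then the product of Laplace distributions centered at `t` with scale `Δ/ε` is
`(ε, 0)`-close to the one centered at `t'`. -/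
theorem laplace_mechanism_dp
    {m : ℕ} (hm : 1 ≤ m) (ε Δ : ℝ) (hε : 0 < ε) (hΔ : 0 < Δ)
    (t t' : Fin m → ℝ) (hsens : ∑ i, |t i - t' i| ≤ Δ) :
    ∀ A : Set (Fin m → ℝ), MeasurableSet A →
      Measure.pi (fun i => laplaceMeasure (t i) (Δ / ε)) A ≤
        ENNReal.ofReal (Real.exp ε) *
          Measure.pi (fun i => laplaceMeasure (t' i) (Δ / ε)) A := by
  intro A hA
  set b : ℝ := Δ / ε with hb
  have hbpos : 0 < b := div_pos hΔ hε
  rw [pi_laplace_eq t b, pi_laplace_eq t' b, withDensity_apply _ hA, withDensity_apply _ hA]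
  have hm2 : Measurable fun x : Fin m → ℝ =>
      ∏ i, ENNReal.ofReal ((2 * b)⁻¹ * Real.exp (-|x i - t' i| / b)) :=
    Finset.measurable_prod _ fun i _ =>
      (laplaceDensity_measurable (t' i) b).comp (measurable_pi_apply i)
  rw [← lintegral_const_mul _ hm2]
  refine setLIntegral_mono (hm2.const_mul _) fun x _ => ?_
  -- pointwise density inequality
  have hnn : ∀ (c : Fin m → ℝ) (i : Fin m),
      0 ≤ (2 * b)⁻¹ * Real.exp (-|x i - c i| / b) := fun c i =>
    mul_nonneg (inv_nonneg.2 (by linarith)) (Real.exp_nonneg _)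
  rw [← ENNReal.ofReal_prod_of_nonneg (fun i _ => hnn t i),
    ← ENNReal.ofReal_prod_of_nonneg (fun i _ => hnn t' i),
    ← ENNReal.ofReal_mul (Real.exp_nonneg ε)]
  refine ENNReal.ofReal_le_ofReal ?_
  have hexp : ∀ c : Fin m → ℝ,
      ∏ i, (2 * b)⁻¹ * Real.exp (-|x i - c i| / b) =
        ((2 * b)⁻¹) ^ m * Real.exp (∑ i, -|x i - c i| / b) := by
    intro c
    rw [Finset.prod_mul_distrib, Finset.prod_const, ← Real.exp_sum]
    simp
  rw [hexp t, hexp t', ← mul_assoc, mul_comm (Real.exp ε), mul_assoc, ← Real.exp_add]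
  refine mul_le_mul_of_nonneg_left (Real.exp_le_exp.2 ?_)
    (pow_nonneg (inv_nonneg.2 (by linarith)) m)
  -- exponent inequality
  rw [← Finset.sum_div, ← Finset.sum_div]
  have key : ∑ i, -|x i - t i| ≤ ∑ i, -|x i - t' i| + ∑ i, |t i - t' i| := by
    rw [← Finset.sum_add_distrib]
    refine Finset.sum_le_sum fun i _ => ?_
    have := abs_sub_abs_le_abs_sub (x i - t' i) (x i - t i)
    have h2 : |x i - t' i - (x i - t i)| = |t i - t' i| := by
      congr 1; ring
    linarith [abs_sub_abs_le_abs_sub (x i - t' i) (x i - t i), h2 ▸ this]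
  have hΔb : Δ / b = ε := by
    rw [hb]
    field_simp
  calc (∑ i, -|x i - t i|) / b ≤ ((∑ i, -|x i - t' i|) + Δ) / b := by
        gcongr
        linarith [key, hsens]
    _ = ε + (∑ i, -|x i - t' i|) / b := by rw [add_div, hΔb]; ring
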